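/- The function J̌ attains a global minimum on M_T: there exists a tuple (Σ*_{ρ_0},…,Σ*_{ρ_{T−1}}) ∈ M_T such that J̌(Σ*_{ρ_0},…,Σ*_{ρ_{T−1}}) ≤ J̌(Σ_{ρ_0},…,Σ_{ρ_{T−1}}) for every tuple (Σ_{ρ_0},…,Σ_{ρ_{T−1}}) ∈ M_T. -/

import Mathlib

open Matrix Filter Topology

/-- The unique symmetric positive semidefinite square root of a positive
semidefinite real matrix (junk value `0` if the matrix is not PSD). -/
noncomputable def msqrt {d : ℕ} (X : Matrix (Fin d) (Fin d) ℝ) :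
    Matrix (Fin d) (Fin d) ℝ :=
  letI := Classical.propDecidable X.PosSemidef
  if h : X.PosSemidef then
    (h.1.eigenvectorUnitary : Matrix (Fin d) (Fin d) ℝ) *
      diagonal (fun i => Real.sqrt (h.1.eigenvalues i)) *
      (star h.1.eigenvectorUnitary : Matrix (Fin d) (Fin d) ℝ)
  else 0

/-- The Frobenius norm of a real square matrix. -/
noncomputable def frob {d : ℕ} (X : Matrix (Fin d) (Fin d) ℝ) : ℝ :=
  Real.sqrt (∑ i, ∑ j, X i j ^ 2)

/-- Data of the mutual information optimal control problem for a discrete-time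
linear system `x_{k+1} = A_k x_k + B_k u_k + w_k`. -/
structure LQData (n m : ℕ) where
  ε : ℝ
  A : ℕ → Matrix (Fin n) (Fin n) ℝ
  B : ℕ → Matrix (Fin n) (Fin m) ℝ
  R : ℕ → Matrix (Fin m) (Fin m) ℝ
  F : Matrix (Fin n) (Fin n) ℝ
  Sw : ℕ → Matrix (Fin n) (Fin n) ℝ
  Sini : Matrix (Fin n) (Fin n) ℝ

namespace LQData

variable {n m : ℕ} (P : LQData n m) (T : ℕ) (Srho : ℕ → Matrix (Fin m) (Fin m) ℝ)

/-- The backward Riccati recursion `Π_k` associated with the prior covariances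
`Σ_{ρ_k}`: `Π_T = F` and
`Π_k = A_kᵀ Π_{k+1} A_k − (1/ε) A_kᵀ Π_{k+1} B_k Σ^{1/2} (I + Σ^{1/2} C_k Σ^{1/2})⁻¹ Σ^{1/2} B_kᵀ Π_{k+1} A_k`
with `C_k = (R_k + B_kᵀ Π_{k+1} B_k)/ε`. -/
noncomputable def Ric (k : ℕ) : Matrix (Fin n) (Fin n) ℝ :=
  if h : T ≤ k then P.F
  else
    let Pk := Ric (k + 1)
    let S := msqrt (Srho k)
    let C := (1 / P.ε) • (P.R k + (P.B k)ᵀ * Pk * P.B k)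
    (P.A k)ᵀ * Pk * P.A k -
      (1 / P.ε) • ((P.A k)ᵀ * Pk * P.B k * S * (1 + S * C * S)⁻¹ * S * (P.B k)ᵀ * Pk * P.A k)
termination_by T - k
decreasing_by omega

/-- `C_k = (R_k + B_kᵀ Π_{k+1} B_k)/ε`. -/
noncomputable def Ck (k : ℕ) : Matrix (Fin m) (Fin m) ℝ :=
  (1 / P.ε) • (P.R k + (P.B k)ᵀ * P.Ric T Srho (k + 1) * P.B k)

/-- `Σ_{Q_k} = ε (R_k + B_kᵀ Π_{k+1} B_k)⁻¹`. -/
noncomputable def SigQ (k : ℕ) : Matrix (Fin m) (Fin m) ℝ :=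
  P.ε • (P.R k + (P.B k)ᵀ * P.Ric T Srho (k + 1) * P.B k)⁻¹

/-- Covariance `Σ_{π_k}` of the optimal policy for the fixed prior. -/
noncomputable def SigPi (k : ℕ) : Matrix (Fin m) (Fin m) ℝ :=
  msqrt (Srho k) * (1 + msqrt (Srho k) * P.Ck T Srho k * msqrt (Srho k))⁻¹ * msqrt (Srho k)

/-- Feedback gain `P_k = −(1/ε) Σ_{π_k} B_kᵀ Π_{k+1} A_k`. -/
noncomputable def Pgain (k : ℕ) : Matrix (Fin m) (Fin n) ℝ :=
  -((1 / P.ε) • (P.SigPi T Srho k * (P.B k)ᵀ * P.Ric T Srho (k + 1) * P.A k))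

/-- Forward state covariance recursion under the optimal policy. -/
noncomputable def Sigx : ℕ → Matrix (Fin n) (Fin n) ℝ
  | 0 => P.Sini
  | k + 1 =>
    (P.A k + P.B k * P.Pgain T Srho k) * Sigx k *
        (P.A k + P.B k * P.Pgain T Srho k)ᵀ +
      P.B k * P.SigPi T Srho k * (P.B k)ᵀ + P.Sw k

/-- The standard LQR Riccati recursion `Π̌_k`. -/
noncomputable def RicLQR (k : ℕ) : Matrix (Fin n) (Fin n) ℝ :=
  if h : T ≤ k then P.F
  else
    let Pk := RicLQR (k + 1)
    (P.A k)ᵀ * Pk * P.A k -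
      (P.A k)ᵀ * Pk * P.B k * (P.R k + (P.B k)ᵀ * Pk * P.B k)⁻¹ * (P.B k)ᵀ * Pk * P.A k
termination_by T - k
decreasing_by omega

/-- `Π̂_k = A_kᵀ ⋯ A_{T−1}ᵀ F A_{T−1} ⋯ A_k`. -/
noncomputable def RicHat (k : ℕ) : Matrix (Fin n) (Fin n) ℝ :=
  if h : T ≤ k then P.F
  else (P.A k)ᵀ * RicHat (k + 1) * P.A k
termination_by T - k
decreasing_by omega

/-- `Σ_{w_{k−1}}` with the convention `Σ_{w_{−1}} := Σ_{x_ini}`. -/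
noncomputable def Swm1 (k : ℕ) : Matrix (Fin n) (Fin n) ℝ :=
  if k = 0 then P.Sini else P.Sw (k - 1)

/-- The matrix `M̌_k` from the sufficient condition for stochastic optimal policies. -/
noncomputable def Mcheck (k : ℕ) : Matrix (Fin m) (Fin m) ℝ :=
  (P.R k + (P.B k)ᵀ * P.RicHat T (k + 1) * P.B k)⁻¹ *
      ((P.B k)ᵀ * P.RicLQR T (k + 1) * P.A k * P.Swm1 k * (P.A k)ᵀ *
        P.RicLQR T (k + 1) * P.B k) *
      (P.R k + (P.B k)ᵀ * P.RicHat T (k + 1) * P.B k)⁻¹ -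
    P.ε • (P.R k + (P.B k)ᵀ * P.RicLQR T (k + 1) * P.B k)⁻¹

/-- State covariance under the zero control input. -/
noncomputable def SigxZero : ℕ → Matrix (Fin n) (Fin n) ℝ
  | 0 => P.Sini
  | k + 1 => P.A k * SigxZero k * (P.A k)ᵀ + P.Sw k

/-- The matrix `M̂_k^zero` from the sufficient condition for deterministic optimal policies. -/
noncomputable def MhatZero (k : ℕ) : Matrix (Fin m) (Fin m) ℝ :=
  (P.R k + (P.B k)ᵀ * P.RicLQR T (k + 1) * P.B k)⁻¹ *
      ((P.B k)ᵀ * P.RicHat T (k + 1) * P.A k * P.SigxZero k * (P.A k)ᵀ *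
        P.RicHat T (k + 1) * P.B k) *
      (P.R k + (P.B k)ᵀ * P.RicLQR T (k + 1) * P.B k)⁻¹ -
    P.ε • (P.R k + (P.B k)ᵀ * P.RicHat T (k + 1) * P.B k)⁻¹


/-- The backward recursion `r_k` for the mean offset:
`r_T = 0` and `r_k = A_k⁻¹ r_{k+1} − Π_k⁻¹ A_kᵀ Π_{k+1} B_k (I + Σ_{ρ_k} C_k)⁻¹ μ_{ρ_k}`. -/
noncomputable def rvec (μ : ℕ → Fin m → ℝ) (k : ℕ) : Fin n → ℝ :=
  if h : T ≤ k then 0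
  else
    ((P.A k)⁻¹).mulVec (rvec μ (k + 1)) -
      ((P.Ric T Srho k)⁻¹ * ((P.A k)ᵀ * P.Ric T Srho (k + 1) * P.B k *
        (1 + Srho k * P.Ck T Srho k)⁻¹)).mulVec (μ k)
termination_by T - k
decreasing_by omega

/-- `Θ_k = ε C_k − ε C_k Σ_{π_k} C_k − (I − C_k Σ_{π_k}) B_kᵀ Π_{k+1} A_k Π_k⁻¹ A_kᵀ Π_{k+1} B_k (I − Σ_{π_k} C_k)`. -/
noncomputable def Theta (k : ℕ) : Matrix (Fin m) (Fin m) ℝ :=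
  P.ε • P.Ck T Srho k - P.ε • (P.Ck T Srho k * P.SigPi T Srho k * P.Ck T Srho k) -
    (1 - P.Ck T Srho k * P.SigPi T Srho k) *
      ((P.B k)ᵀ * P.Ric T Srho (k + 1) * P.A k * (P.Ric T Srho k)⁻¹ *
        ((P.A k)ᵀ * P.Ric T Srho (k + 1) * P.B k)) *
      (1 - P.SigPi T Srho k * P.Ck T Srho k)

end LQData

/-- Extend a `T`-tuple of matrices to a function on `ℕ` (by zero). -/
def extT {m : ℕ} (T : ℕ) (σ : Fin T → Matrix (Fin m) (Fin m) ℝ) :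
    ℕ → Matrix (Fin m) (Fin m) ℝ :=
  fun k => if h : k < T then σ ⟨k, h⟩ else 0


/-- Extend a `T`-tuple of vectors to a function on `ℕ` (by zero). -/
def extV {m : ℕ} (T : ℕ) (μ : Fin T → Fin m → ℝ) : ℕ → Fin m → ℝ :=
  fun k => if h : k < T then μ ⟨k, h⟩ else 0

namespace LQData

variable {n m : ℕ} (P : LQData n m) (T : ℕ)

/-- The reduced objective `J̌` as a function of the `T`-tuple of prior covariances. -/
noncomputable def Jcheck (σ : Fin T → Matrix (Fin m) (Fin m) ℝ) : ℝ :=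
  (1 / 2) * ((P.Ric T (extT T σ) 0 * P.Sini).trace +
    ∑ k : Fin T,
      (P.ε * Real.log ((extT T σ k + P.SigQ T (extT T σ) k).det / (P.SigQ T (extT T σ) k).det) +
        (P.Ric T (extT T σ) (k + 1) * P.Sw k).trace))

/-- `L_k = (Σ_{Q_k} + Σ_{ρ_k})⁻¹`. -/
noncomputable def Lmat (Srho : ℕ → Matrix (Fin m) (Fin m) ℝ) (k : ℕ) :
    Matrix (Fin m) (Fin m) ℝ :=
  (P.SigQ T Srho k + Srho k)⁻¹

/-- `E_k = (1/ε) Σ_{Q_k} B_kᵀ Π_{k+1} A_k`. -/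
noncomputable def Emat (Srho : ℕ → Matrix (Fin m) (Fin m) ℝ) (k : ℕ) :
    Matrix (Fin m) (Fin n) ℝ :=
  (1 / P.ε) • (P.SigQ T Srho k * (P.B k)ᵀ * P.Ric T Srho (k + 1) * P.A k)

/-- `J̌'_k = (ε/2) L_k (Σ_{ρ_k} + Σ_{Q_k} − E_k Σ_{x_k} E_kᵀ) L_k`. -/
noncomputable def Jprime (Srho : ℕ → Matrix (Fin m) (Fin m) ℝ) (k : ℕ) :
    Matrix (Fin m) (Fin m) ℝ :=
  (P.ε / 2) • (P.Lmat T Srho k *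
    (Srho k + P.SigQ T Srho k - P.Emat T Srho k * P.Sigx T Srho k * (P.Emat T Srho k)ᵀ) *
    P.Lmat T Srho k)

/-- The alternating-optimization update map `𝒯` on `T`-tuples of prior covariances:
`𝒯(σ)_k = Σ_{π_k} + P_k Σ_{x_k} P_kᵀ`. -/
noncomputable def Tmap (σ : Fin T → Matrix (Fin m) (Fin m) ℝ) :
    Fin T → Matrix (Fin m) (Fin m) ℝ :=
  fun k =>
    P.SigPi T (extT T σ) k +
      P.Pgain T (extT T σ) k * P.Sigx T (extT T σ) k * (P.Pgain T (extT T σ) k)ᵀ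

/-- The objective `J` as a function of the prior means, for fixed prior covariances:
`J(μ) = (1/2)( r_0ᵀ Π_0 r_0 + Σ_k μ_{ρ_k}ᵀ Θ_k μ_{ρ_k} )`. -/
noncomputable def Jmean (Srho : ℕ → Matrix (Fin m) (Fin m) ℝ) (μ : Fin T → Fin m → ℝ) : ℝ :=
  (1 / 2) *
    (P.rvec T Srho (extV T μ) 0 ⬝ᵥ (P.Ric T Srho 0).mulVec (P.rvec T Srho (extV T μ) 0) +
      ∑ k : Fin T, μ k ⬝ᵥ (P.Theta T Srho k).mulVec (μ k))

end LQData

open Matrix Filter Topology LQData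


namespace JAux
variable {dn dm : ℕ}

lemma psd_conj {d e : ℕ} {A : Matrix (Fin d) (Fin d) ℝ} (hA : A.PosSemidef)
    (X : Matrix (Fin e) (Fin d) ℝ) : (X * A * Xᵀ).PosSemidef := by
  simpa [Matrix.conjTranspose_eq_transpose_of_trivial] using hA.mul_mul_conjTranspose_same X

lemma psd_smul {d : ℕ} {A : Matrix (Fin d) (Fin d) ℝ} (hA : A.PosSemidef) {c : ℝ} (hc : 0 ≤ c) :
    (c • A).PosSemidef := by
  exact Matrix.PosSemidef.smul hA hc

lemma posdef_smul {d : ℕ} {A : Matrix (Fin d) (Fin d) ℝ} (hA : A.PosDef) {c : ℝ} (hc : 0 < c) :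
    (c • A).PosDef := by
  exact Matrix.PosDef.smul hA hc

lemma posdef_transpose {d : ℕ} {A : Matrix (Fin d) (Fin d) ℝ} (hA : A.PosDef) : Aᵀ = A := by
  have := hA.1
  rwa [Matrix.IsHermitian, Matrix.conjTranspose_eq_transpose_of_trivial] at this

lemma psd_transpose {d : ℕ} {A : Matrix (Fin d) (Fin d) ℝ} (hA : A.PosSemidef) : Aᵀ = A := by
  have := hA.1
  rwa [Matrix.IsHermitian, Matrix.conjTranspose_eq_transpose_of_trivial] at this

lemma msqrt_eq {d : ℕ} {σ : Matrix (Fin d) (Fin d) ℝ} (hσ : σ.PosSemidef) :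
    msqrt σ = (hσ.1.eigenvectorUnitary : Matrix (Fin d) (Fin d) ℝ) *
      diagonal (fun i => Real.sqrt (hσ.1.eigenvalues i)) *
      star (hσ.1.eigenvectorUnitary : Matrix (Fin d) (Fin d) ℝ) := by
  unfold msqrt
  rw [dif_pos hσ]

lemma msqrt_psd {d : ℕ} {σ : Matrix (Fin d) (Fin d) ℝ} (hσ : σ.PosSemidef) :
    (msqrt σ).PosSemidef := by
  rw [msqrt_eq hσ]
  have hD : (diagonal (fun i => Real.sqrt (hσ.1.eigenvalues i))).PosSemidef :=
    Matrix.PosSemidef.diagonal fun i => Real.sqrt_nonneg _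
  simpa [Matrix.star_eq_conjTranspose] using
    hD.mul_mul_conjTranspose_same (hσ.1.eigenvectorUnitary : Matrix (Fin d) (Fin d) ℝ)

lemma msqrt_mul_self {d : ℕ} {σ : Matrix (Fin d) (Fin d) ℝ} (hσ : σ.PosSemidef) :
    msqrt σ * msqrt σ = σ := by
  rw [msqrt_eq hσ]
  set U : Matrix (Fin d) (Fin d) ℝ := (hσ.1.eigenvectorUnitary : Matrix (Fin d) (Fin d) ℝ)
  have hUU' : star U * U = 1 := (Matrix.mem_unitaryGroup_iff').mp hσ.1.eigenvectorUnitary.2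
  have hspec : σ = U * diagonal (RCLike.ofReal ∘ hσ.1.eigenvalues) * star U :=
    hσ.1.spectral_theorem
  set D := diagonal (fun i => Real.sqrt (hσ.1.eigenvalues i)) with hD
  have e : U * D * star U * (U * D * star U) = U * D * (star U * U) * D * star U := by
    simp only [Matrix.mul_assoc]
  rw [e, hUU', Matrix.mul_one, Matrix.mul_assoc U D D, hD, diagonal_mul_diagonal]
  conv_rhs => rw [hspec]
  congr 2
  congr 1
  funext i
  simp [Real.mul_self_sqrt (hσ.eigenvalues_nonneg i)]

lemma msqrt_transpose {d : ℕ} {σ : Matrix (Fin d) (Fin d) ℝ} (hσ : σ.PosSemidef) :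
    (msqrt σ)ᵀ = msqrt σ := psd_transpose (msqrt_psd hσ)

section Step
variable {C σ : Matrix (Fin dm) (Fin dm) ℝ}

/-- `1 + S C S` is positive definite. -/
lemma onePlus_posdef (hC : C.PosDef) (hσ : σ.PosSemidef) :
    (1 + msqrt σ * C * msqrt σ).PosDef := by
  have h1 : (msqrt σ * C * msqrt σ).PosSemidef := by
    have := psd_conj hC.posSemidef (msqrt σ)
    rwa [msqrt_transpose hσ] at this
  exact Matrix.PosDef.add_posSemidef Matrix.PosDef.one h1

lemma det_sandwich (hC : C.PosDef) (hσ : σ.PosSemidef) :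
    (1 + σ * C).det = (1 + msqrt σ * C * msqrt σ).det := by
  have h : σ * C = msqrt σ * (msqrt σ * C) := by
    rw [← Matrix.mul_assoc, msqrt_mul_self hσ]
  rw [h, Matrix.det_one_add_mul_comm]

lemma onePlus_det_pos (hC : C.PosDef) (hσ : σ.PosSemidef) : 0 < (1 + σ * C).det := by
  rw [det_sandwich hC hσ]
  exact (onePlus_posdef hC hσ).det_pos

lemma sandwich_eq (hC : C.PosDef) (hσ : σ.PosSemidef) :
    msqrt σ * (1 + msqrt σ * C * msqrt σ)⁻¹ * msqrt σ = (1 + σ * C)⁻¹ * σ := by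
  set S := msqrt σ with hS
  have hSS : S * S = σ := msqrt_mul_self hσ
  have hdet1 : IsUnit (1 + S * C * S).det :=
    isUnit_iff_ne_zero.mpr (ne_of_gt (onePlus_posdef hC hσ).det_pos)
  have hdet2 : IsUnit (1 + σ * C).det :=
    isUnit_iff_ne_zero.mpr (ne_of_gt (onePlus_det_pos hC hσ))
  have hcomm : (1 + σ * C) * S = S * (1 + S * C * S) := by
    rw [Matrix.add_mul, Matrix.mul_add, Matrix.one_mul, Matrix.mul_one, ← hSS]
    simp only [Matrix.mul_assoc]
  have key : S * (1 + S * C * S)⁻¹ = (1 + σ * C)⁻¹ * S := by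
    have h1 : (1 + σ * C) * (S * (1 + S * C * S)⁻¹) = S := by
      rw [← Matrix.mul_assoc, hcomm, Matrix.mul_assoc, Matrix.mul_nonsing_inv _ hdet1,
        Matrix.mul_one]
    calc S * (1 + S * C * S)⁻¹
        = (1 + σ * C)⁻¹ * ((1 + σ * C) * (S * (1 + S * C * S)⁻¹)) := by
          rw [← Matrix.mul_assoc, Matrix.nonsing_inv_mul _ hdet2, Matrix.one_mul]
      _ = (1 + σ * C)⁻¹ * S := by rw [h1]
  rw [key, Matrix.mul_assoc, hSS]

lemma sigpi_psd (hC : C.PosDef) (hσ : σ.PosSemidef) : ((1 + σ * C)⁻¹ * σ).PosSemidef := by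
  rw [← sandwich_eq hC hσ]
  have h := psd_conj ((onePlus_posdef hC hσ).inv).posSemidef (msqrt σ)
  rwa [msqrt_transpose hσ] at h

lemma cinv_sub_sigpi (hC : C.PosDef) (hσ : σ.PosSemidef) :
    C⁻¹ - (1 + σ * C)⁻¹ * σ = (C + C * σ * C)⁻¹ := by
  have hCdet : IsUnit C.det := isUnit_iff_ne_zero.mpr (ne_of_gt hC.det_pos)
  have hdet2 : IsUnit (1 + σ * C).det :=
    isUnit_iff_ne_zero.mpr (ne_of_gt (onePlus_det_pos hC hσ))
  symm
  apply Matrix.inv_eq_left_inv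
  have hCC : C⁻¹ * C = 1 := Matrix.nonsing_inv_mul _ hCdet
  have h2 : (1 + σ * C)⁻¹ * ((1 + σ * C) * (σ * C)) = σ * C := by
    rw [← Matrix.mul_assoc, Matrix.nonsing_inv_mul _ hdet2, Matrix.one_mul]
  calc (C⁻¹ - (1 + σ * C)⁻¹ * σ) * (C + C * σ * C)
      = C⁻¹ * C + C⁻¹ * C * (σ * C) - (1 + σ * C)⁻¹ * ((1 + σ * C) * (σ * C)) := by
        simp only [Matrix.sub_mul, Matrix.mul_add, Matrix.add_mul, Matrix.one_mul,
          Matrix.mul_assoc]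
        abel
    _ = 1 := by
        rw [hCC, h2, Matrix.one_mul]
        exact add_sub_cancel_right 1 (σ * C)

lemma cinv_sub_psd (hC : C.PosDef) (hσ : σ.PosSemidef) :
    (C⁻¹ - (1 + σ * C)⁻¹ * σ).PosSemidef := by
  rw [cinv_sub_sigpi hC hσ]
  have h1 : (C * σ * Cᵀ).PosSemidef := psd_conj hσ C
  rw [posdef_transpose hC] at h1
  exact (Matrix.PosDef.add_posSemidef hC h1).inv.posSemidef

/-- Woodbury-style positivity: `Π − Π B (R + Bᵀ Π B)⁻¹ Bᵀ Π ⪰ 0`. -/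
lemma schur_psd {Pm : Matrix (Fin dn) (Fin dn) ℝ} {B : Matrix (Fin dn) (Fin dm) ℝ}
    {R : Matrix (Fin dm) (Fin dm) ℝ} (hPm : Pm.PosSemidef) (hR : R.PosDef) :
    (Pm - Pm * B * (R + Bᵀ * Pm * B)⁻¹ * (Bᵀ * Pm)).PosSemidef := by
  set Y : Matrix (Fin dm) (Fin dm) ℝ := R + Bᵀ * Pm * B with hY
  have hYpd : Y.PosDef := by
    have h1 : (Bᵀ * Pm * Bᵀᵀ).PosSemidef := psd_conj hPm Bᵀ
    rw [Matrix.transpose_transpose] at h1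
    exact Matrix.PosDef.add_posSemidef hR h1
  set G : Matrix (Fin dm) (Fin dm) ℝ := Y⁻¹ with hG
  have hGpd : G.PosDef := hYpd.inv
  have hGY : G * Y = 1 := Matrix.nonsing_inv_mul _ (isUnit_iff_ne_zero.mpr hYpd.det_pos.ne')
  have hGt : Gᵀ = G := posdef_transpose hGpd
  have hPt : Pmᵀ = Pm := psd_transpose hPm
  set W : Matrix (Fin dn) (Fin dn) ℝ := 1 - B * G * (Bᵀ * Pm) with hW
  set K : Matrix (Fin dm) (Fin dn) ℝ := G * (Bᵀ * Pm) with hK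
  have hWt : Wᵀ = 1 - Pm * B * G * Bᵀ := by
    rw [hW]
    simp [Matrix.transpose_sub, Matrix.transpose_mul, hGt, hPt, Matrix.mul_assoc]
  have hKt : Kᵀ = Pm * B * G := by
    rw [hK]
    simp [Matrix.transpose_mul, hGt, hPt, Matrix.mul_assoc]
  have hRY : R = Y - Bᵀ * Pm * B := by rw [hY]; abel
  have hmid : ∀ X : Matrix (Fin dm) (Fin dn) ℝ, G * (Y * (G * X)) = G * X := by
    intro X
    rw [← Matrix.mul_assoc G Y, hGY, Matrix.one_mul]
  have key : Pm - Pm * B * G * (Bᵀ * Pm)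
      = Wᵀ * Pm * W + Kᵀ * R * K := by
    rw [hWt, hKt, hK, hW, hRY]
    have expand : (1 - Pm * B * G * Bᵀ) * Pm * (1 - B * G * (Bᵀ * Pm))
          + Pm * B * G * (Y - Bᵀ * Pm * B) * (G * (Bᵀ * Pm))
        = Pm - Pm * (B * (G * (Bᵀ * Pm))) - Pm * (B * (G * (Bᵀ * Pm)))
          + Pm * (B * (G * (Bᵀ * (Pm * (B * (G * (Bᵀ * Pm)))))))
          + Pm * (B * (G * (Y * (G * (Bᵀ * Pm)))))
          - Pm * (B * (G * (Bᵀ * (Pm * (B * (G * (Bᵀ * Pm))))))) := by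
      simp only [Matrix.sub_mul, Matrix.mul_sub, Matrix.one_mul, Matrix.mul_one,
        Matrix.mul_assoc]
      abel
    rw [expand, hmid]
    simp only [Matrix.mul_assoc]
    abel
  rw [key]
  have h1 := psd_conj hPm Wᵀ
  rw [Matrix.transpose_transpose] at h1
  have h2 := psd_conj hR.posSemidef Kᵀ
  rw [Matrix.transpose_transpose] at h2
  exact h1.add h2

lemma smul_inv_eq {d : ℕ} {Y : Matrix (Fin d) (Fin d) ℝ} (hY : IsUnit Y.det) {ε : ℝ}
    (hε : 0 < ε) : ((1 / ε) • Y)⁻¹ = ε • Y⁻¹ := by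
  apply Matrix.inv_eq_left_inv
  rw [Matrix.smul_mul, Matrix.mul_smul, smul_smul, Matrix.nonsing_inv_mul _ hY]
  rw [mul_one_div_cancel hε.ne', one_smul]

/-- Positivity of the one-step information-regularized Riccati map. -/
lemma step_psd {Pm A : Matrix (Fin dn) (Fin dn) ℝ} {B : Matrix (Fin dn) (Fin dm) ℝ}
    {R : Matrix (Fin dm) (Fin dm) ℝ} {ε : ℝ}
    (hPm : Pm.PosSemidef) (hR : R.PosDef) (hσ : σ.PosSemidef) (hε : 0 < ε)
    {C : Matrix (Fin dm) (Fin dm) ℝ} (hCdef : C = (1 / ε) • (R + Bᵀ * Pm * B)) :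
    (Aᵀ * Pm * A
      - (1 / ε) • (Aᵀ * Pm * B * ((1 + σ * C)⁻¹ * σ) * Bᵀ * Pm * A)).PosSemidef := by
  set Y : Matrix (Fin dm) (Fin dm) ℝ := R + Bᵀ * Pm * B with hY
  have hYpd : Y.PosDef := by
    have h1 : (Bᵀ * Pm * Bᵀᵀ).PosSemidef := psd_conj hPm Bᵀ
    rw [Matrix.transpose_transpose] at h1
    exact Matrix.PosDef.add_posSemidef hR h1
  have hYdet : IsUnit Y.det := isUnit_iff_ne_zero.mpr hYpd.det_pos.ne'
  have hCpd : C.PosDef := by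
    rw [hCdef]
    exact posdef_smul hYpd (by positivity)
  have hCinv : C⁻¹ = ε • Y⁻¹ := by rw [hCdef]; exact smul_inv_eq hYdet hε
  have hPt : Pmᵀ = Pm := psd_transpose hPm
  set Sp : Matrix (Fin dm) (Fin dm) ℝ := (1 + σ * C)⁻¹ * σ with hSp
  have hD2 : Pm - (1 / ε) • (Pm * B * Sp * (Bᵀ * Pm))
      = (Pm - Pm * B * Y⁻¹ * (Bᵀ * Pm)) + (1 / ε) • (Pm * B * (C⁻¹ - Sp) * (Bᵀ * Pm)) := by
    rw [Matrix.mul_sub, Matrix.sub_mul, hCinv]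
    rw [Matrix.mul_smul, Matrix.smul_mul, smul_sub, smul_smul, one_div_mul_cancel hε.ne',
      one_smul]
    abel
  have hD2psd : (Pm - (1 / ε) • (Pm * B * Sp * (Bᵀ * Pm))).PosSemidef := by
    rw [hD2]
    refine Matrix.PosSemidef.add (schur_psd hPm hR) (psd_smul ?_ (by positivity))
    have h := psd_conj (cinv_sub_psd hCpd hσ) (Pm * B)
    rwa [Matrix.transpose_mul, hPt] at h
  have hfin : Aᵀ * Pm * A - (1 / ε) • (Aᵀ * Pm * B * Sp * Bᵀ * Pm * A)
      = Aᵀ * (Pm - (1 / ε) • (Pm * B * Sp * (Bᵀ * Pm))) * A := by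
    rw [Matrix.mul_sub, Matrix.sub_mul, Matrix.mul_smul, Matrix.smul_mul]
    simp only [Matrix.mul_assoc]
  rw [hfin]
  have h := psd_conj hD2psd Aᵀ
  rwa [Matrix.transpose_transpose] at h



end Step

variable {d e : ℕ}

lemma psd_diag_nonneg {A : Matrix (Fin d) (Fin d) ℝ} (hA : A.PosSemidef) (i : Fin d) :
    0 ≤ A i i := by
  exact hA.diag_nonneg

lemma psd_trace_nonneg {A : Matrix (Fin d) (Fin d) ℝ} (hA : A.PosSemidef) : 0 ≤ A.trace :=
  Finset.sum_nonneg fun i _ => psd_diag_nonneg hA i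

lemma trace_mul_nonneg {A B : Matrix (Fin d) (Fin d) ℝ} (hA : A.PosSemidef)
    (hB : B.PosSemidef) : 0 ≤ (A * B).trace := by
  obtain ⟨X, hX⟩ : ∃ X : Matrix (Fin d) (Fin d) ℝ, A = Xᴴ * X :=
    ⟨msqrt A, by rw [Matrix.conjTranspose_eq_transpose_of_trivial, msqrt_transpose hA,
      msqrt_mul_self hA]⟩
  have h1 : (A * B).trace = (X * B * Xᴴ).trace := by
    rw [hX, Matrix.mul_assoc, Matrix.trace_mul_comm, Matrix.mul_assoc]
  rw [h1]
  exact psd_trace_nonneg (by simpa using hB.mul_mul_conjTranspose_same X)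

lemma one_add_sum_le_prod {ι : Type*} (s : Finset ι) (f : ι → ℝ) (h : ∀ i ∈ s, 0 ≤ f i) :
    1 + ∑ i ∈ s, f i ≤ ∏ i ∈ s, (1 + f i) := by
  classical
  induction s using Finset.induction_on with
  | empty => simp
  | insert a s hns ih =>
    rw [Finset.sum_insert hns, Finset.prod_insert hns]
    have h1 : ∀ i ∈ s, 0 ≤ f i := fun i hi => h i (Finset.mem_insert_of_mem hi)
    have h2 := ih h1
    have h3 : 0 ≤ f a := h a (Finset.mem_insert_self a s)
    have h4 : 0 ≤ ∑ i ∈ s, f i := Finset.sum_nonneg h1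
    nlinarith

/-- `det (1 + M) ≥ 1 + trace M` for `M` PSD. -/
lemma det_one_add_psd {M : Matrix (Fin d) (Fin d) ℝ} (hM : M.PosSemidef) :
    1 + M.trace ≤ (1 + M).det := by
  classical
  set U : Matrix (Fin d) (Fin d) ℝ := (hM.1.eigenvectorUnitary : Matrix (Fin d) (Fin d) ℝ)
  have hUU : U * star U = 1 := (Matrix.mem_unitaryGroup_iff).mp hM.1.eigenvectorUnitary.2
  have hUU' : star U * U = 1 := (Matrix.mem_unitaryGroup_iff').mp hM.1.eigenvectorUnitary.2
  have hspec : M = U * diagonal (RCLike.ofReal ∘ hM.1.eigenvalues) * star U :=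
    hM.1.spectral_theorem
  have hone : (1 : Matrix (Fin d) (Fin d) ℝ) = U * 1 * star U := by
    rw [Matrix.mul_one, hUU]
  have hsum : 1 + M = U * (1 + diagonal (RCLike.ofReal ∘ hM.1.eigenvalues)) * star U := by
    rw [Matrix.mul_add, Matrix.add_mul, ← hone, ← hspec]
  have hdetU : U.det * (star U).det = 1 := by
    rw [← Matrix.det_mul, hUU, Matrix.det_one]
  have hdet : (1 + M).det =
      ((1 : Matrix (Fin d) (Fin d) ℝ) + diagonal (RCLike.ofReal ∘ hM.1.eigenvalues)).det := by
    rw [hsum, Matrix.det_mul, Matrix.det_mul, mul_right_comm, hdetU, one_mul]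
  have htr : M.trace = ∑ i, hM.1.eigenvalues i := by
    conv_lhs => rw [hspec]
    rw [Matrix.trace_mul_cycle, hUU', Matrix.one_mul, Matrix.trace_diagonal]
    simp
  have hdiag : ((1 : Matrix (Fin d) (Fin d) ℝ) + diagonal (RCLike.ofReal ∘ hM.1.eigenvalues)).det
      = ∏ i, (1 + hM.1.eigenvalues i) := by
    rw [← Matrix.diagonal_one, Matrix.diagonal_add, Matrix.det_diagonal]
    simp
  rw [hdet, hdiag, htr]
  exact one_add_sum_le_prod Finset.univ _ fun i _ => hM.eigenvalues_nonneg i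

/-- A positive definite matrix dominates a positive multiple of the identity. -/
lemma exists_smul_one_le {A : Matrix (Fin d) (Fin d) ℝ} (hd : 0 < d) (hA : A.PosDef) :
    ∃ c : ℝ, 0 < c ∧ (A - c • 1).PosSemidef := by
  classical
  haveI : Nonempty (Fin d) := ⟨⟨0, hd⟩⟩
  set ev := hA.1.eigenvalues
  obtain ⟨i0, -, hmin⟩ := Finset.exists_min_image Finset.univ ev ⟨Classical.arbitrary (Fin d), Finset.mem_univ _⟩
  refine ⟨ev i0, hA.eigenvalues_pos i0, ?_⟩
  set U : Matrix (Fin d) (Fin d) ℝ := (hA.1.eigenvectorUnitary : Matrix (Fin d) (Fin d) ℝ)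
  have hUU : U * star U = 1 := (Matrix.mem_unitaryGroup_iff).mp hA.1.eigenvectorUnitary.2
  have hspec : A = U * diagonal (RCLike.ofReal ∘ ev) * star U := hA.1.spectral_theorem
  have hsub : A - ev i0 • 1 = U * diagonal (fun i => ev i - ev i0) * star U := by
    have hone : (ev i0 • 1 : Matrix (Fin d) (Fin d) ℝ) = U * (ev i0 • 1) * star U := by
      rw [Matrix.mul_smul, Matrix.smul_mul, Matrix.mul_one, hUU]
    rw [hspec, hone, ← Matrix.sub_mul, ← Matrix.mul_sub]
    congr 2
    ext i j
    rcases eq_or_ne i j with rfl | h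
    · simp
    · simp [Matrix.one_apply_ne h, Matrix.diagonal_apply_ne _ h]
  rw [hsub]
  have hdiag : (diagonal (fun i => ev i - ev i0)).PosSemidef :=
    Matrix.PosSemidef.diagonal fun i => sub_nonneg.mpr (hmin i (Finset.mem_univ i))
  simpa [Matrix.star_eq_conjTranspose] using hdiag.mul_mul_conjTranspose_same U

lemma trace_mul_ge {C σ : Matrix (Fin d) (Fin d) ℝ} {c : ℝ}
    (hC : (C - c • 1).PosSemidef) (hσ : σ.PosSemidef) :
    c * σ.trace ≤ (C * σ).trace := by
  have h := trace_mul_nonneg hC hσ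
  rw [Matrix.sub_mul, Matrix.trace_sub, Matrix.smul_mul, Matrix.one_mul, Matrix.trace_smul] at h
  simp only [smul_eq_mul] at h
  linarith

lemma isClosed_psd : IsClosed {A : Matrix (Fin d) (Fin d) ℝ | A.PosSemidef} := by
  have : {A : Matrix (Fin d) (Fin d) ℝ | A.PosSemidef}
      = {A | Aᴴ = A} ∩ ⋂ x : Fin d → ℝ, {A | 0 ≤ x ⬝ᵥ A *ᵥ x} := by
    ext A
    simp only [Set.mem_setOf_eq, Set.mem_inter_iff, Set.mem_iInter]
    constructor
    · exact fun h => ⟨h.1, fun x => by simpa using h.dotProduct_mulVec_nonneg x⟩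
    · exact fun h => Matrix.PosSemidef.of_dotProduct_mulVec_nonneg h.1
        (fun x => by simpa using h.2 x)
  rw [this]
  refine IsClosed.inter ?_ (isClosed_iInter fun x => ?_)
  · exact isClosed_eq (continuous_id.matrix_conjTranspose) continuous_id
  · exact isClosed_le continuous_const ((continuous_const).dotProduct
      ((continuous_id.matrix_mulVec continuous_const)))




lemma c_posdef {dn dm : ℕ} {Pm : Matrix (Fin dn) (Fin dn) ℝ} {B : Matrix (Fin dn) (Fin dm) ℝ}
    {R : Matrix (Fin dm) (Fin dm) ℝ} {ε : ℝ} (hPm : Pm.PosSemidef) (hR : R.PosDef)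
    (hε : 0 < ε) : ((1 / ε) • (R + Bᵀ * Pm * B)).PosDef := by
  have h1 : (Bᵀ * Pm * Bᵀᵀ).PosSemidef := psd_conj hPm Bᵀ
  rw [Matrix.transpose_transpose] at h1
  exact posdef_smul (Matrix.PosDef.add_posSemidef hR h1) (by positivity)

end JAux


namespace LQData
open JAux

variable {n m : ℕ}

theorem ric_unfold (P : LQData n m) (T : ℕ) (σ : ℕ → Matrix (Fin m) (Fin m) ℝ)
    (k : ℕ) (h : ¬ T ≤ k) :
    P.Ric T σ k = (P.A k)ᵀ * P.Ric T σ (k + 1) * P.A k -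
      (1 / P.ε) • ((P.A k)ᵀ * P.Ric T σ (k + 1) * P.B k * msqrt (σ k) *
        (1 + msqrt (σ k) * ((1 / P.ε) • (P.R k + (P.B k)ᵀ * P.Ric T σ (k + 1) * P.B k)) *
          msqrt (σ k))⁻¹ *
        msqrt (σ k) * (P.B k)ᵀ * P.Ric T σ (k + 1) * P.A k) := by
  rw [LQData.Ric, dif_neg h]

theorem ric_psd (P : LQData n m) (T : ℕ) (hε : 0 < P.ε) (hR : ∀ k < T, (P.R k).PosDef)
    (hF : P.F.PosDef) (σ : ℕ → Matrix (Fin m) (Fin m) ℝ) (hσ : ∀ j, (σ j).PosSemidef)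
    (k : ℕ) : (P.Ric T σ k).PosSemidef := by
  by_cases h : T ≤ k
  · rw [LQData.Ric, dif_pos h]; exact hF.posSemidef
  · have ih : (P.Ric T σ (k + 1)).PosSemidef := ric_psd P T hε hR hF σ hσ (k + 1)
    rw [ric_unfold P T σ k h]
    have hCpd : ((1 / P.ε) • (P.R k + (P.B k)ᵀ * P.Ric T σ (k + 1) * P.B k)).PosDef :=
      c_posdef ih (hR k (not_le.mp h)) hε
    have e1 : (P.A k)ᵀ * P.Ric T σ (k + 1) * P.B k * msqrt (σ k) *
          (1 + msqrt (σ k) * ((1 / P.ε) • (P.R k + (P.B k)ᵀ * P.Ric T σ (k + 1) * P.B k)) *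
            msqrt (σ k))⁻¹ * msqrt (σ k)
        = (P.A k)ᵀ * P.Ric T σ (k + 1) * P.B k *
          ((1 + σ k * ((1 / P.ε) • (P.R k + (P.B k)ᵀ * P.Ric T σ (k + 1) * P.B k)))⁻¹ * σ k) := by
      rw [Matrix.mul_assoc ((P.A k)ᵀ * P.Ric T σ (k + 1) * P.B k) (msqrt (σ k)) _,
        Matrix.mul_assoc ((P.A k)ᵀ * P.Ric T σ (k + 1) * P.B k) (msqrt (σ k) * _) (msqrt (σ k)),
        sandwich_eq hCpd (hσ k)]
    rw [e1]
    exact step_psd ih (hR k (not_le.mp h)) (hσ k) hε rfl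
termination_by T - k
decreasing_by omega

theorem ric_eq_alt (P : LQData n m) (T : ℕ) (hε : 0 < P.ε) (hR : ∀ k < T, (P.R k).PosDef)
    (hF : P.F.PosDef) (σ : ℕ → Matrix (Fin m) (Fin m) ℝ) (hσ : ∀ j, (σ j).PosSemidef)
    (k : ℕ) (h : ¬ T ≤ k) :
    P.Ric T σ k = (P.A k)ᵀ * P.Ric T σ (k + 1) * P.A k -
      (1 / P.ε) • ((P.A k)ᵀ * P.Ric T σ (k + 1) * P.B k *
        ((1 + σ k * P.Ck T σ k)⁻¹ * σ k) * (P.B k)ᵀ * P.Ric T σ (k + 1) * P.A k) := by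
  have ih : (P.Ric T σ (k + 1)).PosSemidef := ric_psd P T hε hR hF σ hσ (k + 1)
  rw [ric_unfold P T σ k h]
  have hCpd : ((1 / P.ε) • (P.R k + (P.B k)ᵀ * P.Ric T σ (k + 1) * P.B k)).PosDef :=
    c_posdef ih (hR k (not_le.mp h)) hε
  have e1 : (P.A k)ᵀ * P.Ric T σ (k + 1) * P.B k * msqrt (σ k) *
        (1 + msqrt (σ k) * ((1 / P.ε) • (P.R k + (P.B k)ᵀ * P.Ric T σ (k + 1) * P.B k)) *
          msqrt (σ k))⁻¹ * msqrt (σ k)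
      = (P.A k)ᵀ * P.Ric T σ (k + 1) * P.B k *
        ((1 + σ k * ((1 / P.ε) • (P.R k + (P.B k)ᵀ * P.Ric T σ (k + 1) * P.B k)))⁻¹ * σ k) := by
    rw [Matrix.mul_assoc ((P.A k)ᵀ * P.Ric T σ (k + 1) * P.B k) (msqrt (σ k)) _,
      Matrix.mul_assoc ((P.A k)ᵀ * P.Ric T σ (k + 1) * P.B k) (msqrt (σ k) * _) (msqrt (σ k)),
      sandwich_eq hCpd (hσ k)]
  rw [e1]
  rfl

theorem ck_posdef (P : LQData n m) (T : ℕ) (hε : 0 < P.ε) (hR : ∀ k < T, (P.R k).PosDef)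
    (hF : P.F.PosDef) (σ : ℕ → Matrix (Fin m) (Fin m) ℝ) (hσ : ∀ j, (σ j).PosSemidef)
    (k : ℕ) (hk : k < T) : (P.Ck T σ k).PosDef :=
  c_posdef (ric_psd P T hε hR hF σ hσ (k + 1)) (hR k hk) hε

theorem sigQ_eq (P : LQData n m) (T : ℕ) (hε : 0 < P.ε) (hR : ∀ k < T, (P.R k).PosDef)
    (hF : P.F.PosDef) (σ : ℕ → Matrix (Fin m) (Fin m) ℝ) (hσ : ∀ j, (σ j).PosSemidef)
    (k : ℕ) (hk : k < T) : P.SigQ T σ k = (P.Ck T σ k)⁻¹ := by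
  have ih : (P.Ric T σ (k + 1)).PosSemidef := ric_psd P T hε hR hF σ hσ (k + 1)
  have h1 : (P.R k + (P.B k)ᵀ * P.Ric T σ (k + 1) * P.B k).PosDef := by
    have h2 : ((P.B k)ᵀ * P.Ric T σ (k + 1) * (P.B k)ᵀᵀ).PosSemidef := psd_conj ih (P.B k)ᵀ
    rw [Matrix.transpose_transpose] at h2
    exact Matrix.PosDef.add_posSemidef (hR k hk) h2
  rw [LQData.SigQ, LQData.Ck, smul_inv_eq (isUnit_iff_ne_zero.mpr h1.det_pos.ne') hε]

theorem sigQ_posdef (P : LQData n m) (T : ℕ) (hε : 0 < P.ε) (hR : ∀ k < T, (P.R k).PosDef)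
    (hF : P.F.PosDef) (σ : ℕ → Matrix (Fin m) (Fin m) ℝ) (hσ : ∀ j, (σ j).PosSemidef)
    (k : ℕ) (hk : k < T) : (P.SigQ T σ k).PosDef := by
  rw [sigQ_eq P T hε hR hF σ hσ k hk]
  exact (ck_posdef P T hε hR hF σ hσ k hk).inv

theorem ratio_eq (P : LQData n m) (T : ℕ) (hε : 0 < P.ε) (hR : ∀ k < T, (P.R k).PosDef)
    (hF : P.F.PosDef) (σ : ℕ → Matrix (Fin m) (Fin m) ℝ) (hσ : ∀ j, (σ j).PosSemidef)
    (k : ℕ) (hk : k < T) :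
    (σ k + P.SigQ T σ k).det / (P.SigQ T σ k).det = (1 + σ k * P.Ck T σ k).det := by
  have hCpd := ck_posdef P T hε hR hF σ hσ k hk
  have hQ := sigQ_posdef P T hε hR hF σ hσ k hk
  have hCQ : P.Ck T σ k * P.SigQ T σ k = 1 := by
    rw [sigQ_eq P T hε hR hF σ hσ k hk]
    exact Matrix.mul_nonsing_inv _ (isUnit_iff_ne_zero.mpr hCpd.det_pos.ne')
  have hfac : σ k + P.SigQ T σ k = (1 + σ k * P.Ck T σ k) * P.SigQ T σ k := by
    rw [Matrix.add_mul, Matrix.one_mul, Matrix.mul_assoc, hCQ, Matrix.mul_one, add_comm]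
  rw [hfac, Matrix.det_mul, mul_div_assoc, div_self hQ.det_pos.ne', mul_one]

theorem ratio_ge (P : LQData n m) (T : ℕ) (hε : 0 < P.ε) (hR : ∀ k < T, (P.R k).PosDef)
    (hF : P.F.PosDef) (σ : ℕ → Matrix (Fin m) (Fin m) ℝ) (hσ : ∀ j, (σ j).PosSemidef)
    (k : ℕ) (hk : k < T) :
    1 + (P.Ck T σ k * σ k).trace ≤ (1 + σ k * P.Ck T σ k).det := by
  have hCpd := ck_posdef P T hε hR hF σ hσ k hk
  rw [det_sandwich hCpd (hσ k)]
  have hS : (msqrt (σ k) * P.Ck T σ k * msqrt (σ k)).PosSemidef := by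
    have h := psd_conj hCpd.posSemidef (msqrt (σ k))
    rwa [msqrt_transpose (hσ k)] at h
  have h1 := det_one_add_psd hS
  have htr : (msqrt (σ k) * P.Ck T σ k * msqrt (σ k)).trace = (P.Ck T σ k * σ k).trace := by
    rw [Matrix.trace_mul_cycle, msqrt_mul_self (hσ k), Matrix.trace_mul_comm]
  rwa [htr] at h1

end LQData

namespace LQData
open JAux

variable {n m : ℕ}

lemma extT_psd {T : ℕ} (τ : Fin T → Matrix (Fin m) (Fin m) ℝ)
    (hτ : ∀ k, (τ k).PosSemidef) : ∀ j, (extT T τ j).PosSemidef := by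
  intro j
  unfold extT
  split
  · exact hτ _
  · exact Matrix.PosSemidef.zero

lemma extT_coe {T : ℕ} (τ : Fin T → Matrix (Fin m) (Fin m) ℝ) (k : Fin T) :
    extT T τ (k : ℕ) = τ k := by
  simp [extT, k.isLt]

theorem jcheck_lb (P : LQData n m) (T : ℕ) (hε : 0 < P.ε) (hR : ∀ k < T, (P.R k).PosDef)
    (hSw : ∀ k < T, (P.Sw k).PosDef) (hF : P.F.PosDef) (hSini : P.Sini.PosDef)
    (cR : ℕ → ℝ) (hcR : ∀ k < T, 0 < cR k ∧ (P.R k - cR k • 1).PosSemidef)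
    (τ : Fin T → Matrix (Fin m) (Fin m) ℝ) (hτ : ∀ k, (τ k).PosSemidef) (k0 : Fin T) :
    P.ε / 2 * Real.log (1 + cR (k0 : ℕ) / P.ε * (τ k0).trace) ≤ P.Jcheck T τ := by
  have hσ : ∀ j, (extT T τ j).PosSemidef := extT_psd τ hτ
  set σ : ℕ → Matrix (Fin m) (Fin m) ℝ := extT T τ with hσdef
  have hσcoe : ∀ k : Fin T, σ (k : ℕ) = τ k := fun k => extT_coe τ k
  have hbase : ∀ k : Fin T, 0 < 1 + cR (k : ℕ) / P.ε * (σ (k : ℕ)).trace := by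
    intro k
    have h1 : 0 ≤ (σ (k : ℕ)).trace := psd_trace_nonneg (hσ _)
    have h2 : 0 < cR (k : ℕ) / P.ε := div_pos (hcR _ k.isLt).1 hε
    nlinarith
  have hratio : ∀ k : Fin T,
      1 + cR (k : ℕ) / P.ε * (σ (k : ℕ)).trace ≤
        (σ (k : ℕ) + P.SigQ T σ (k : ℕ)).det / (P.SigQ T σ (k : ℕ)).det := by
    intro k
    have hk : (k : ℕ) < T := k.isLt
    rw [ratio_eq P T hε hR hF σ hσ k hk]
    refine le_trans ?_ (ratio_ge P T hε hR hF σ hσ k hk)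
    have hCsub : (P.Ck T σ (k : ℕ) - (cR (k : ℕ) / P.ε) • 1).PosSemidef := by
      have he : P.Ck T σ (k : ℕ) - (cR (k : ℕ) / P.ε) • 1
          = (1 / P.ε) • ((P.R (k : ℕ) - cR (k : ℕ) • 1) +
              (P.B (k : ℕ))ᵀ * P.Ric T σ ((k : ℕ) + 1) * P.B (k : ℕ)) := by
        rw [LQData.Ck]
        match_scalars <;> field_simp
      rw [he]
      refine psd_smul (Matrix.PosSemidef.add (hcR _ hk).2 ?_) (by positivity)
      have h2 := psd_conj (ric_psd P T hε hR hF σ hσ ((k : ℕ) + 1)) (P.B (k : ℕ))ᵀ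
      rwa [Matrix.transpose_transpose] at h2
    have htr := trace_mul_ge hCsub (hσ (k : ℕ))
    linarith
  have hterm : ∀ k : Fin T,
      P.ε * Real.log (1 + cR (k : ℕ) / P.ε * (σ (k : ℕ)).trace) ≤
        P.ε * Real.log ((σ (k : ℕ) + P.SigQ T σ (k : ℕ)).det / (P.SigQ T σ (k : ℕ)).det) := by
    intro k
    have h1 := hratio k
    have h2 := hbase k
    exact mul_le_mul_of_nonneg_left
      ((Real.log_le_log_iff h2 (lt_of_lt_of_le h2 h1)).mpr h1) hε.le
  have hterm0 : ∀ k : Fin T,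
      0 ≤ P.ε * Real.log (1 + cR (k : ℕ) / P.ε * (σ (k : ℕ)).trace) := by
    intro k
    have h1 : 0 ≤ (σ (k : ℕ)).trace := psd_trace_nonneg (hσ _)
    have h2 : 0 < cR (k : ℕ) / P.ε := div_pos (hcR _ k.isLt).1 hε
    have : (1:ℝ) ≤ 1 + cR (k : ℕ) / P.ε * (σ (k : ℕ)).trace := by nlinarith
    exact mul_nonneg hε.le (Real.log_nonneg this)
  have hSwtr : ∀ k : Fin T, 0 ≤ (P.Ric T σ ((k : ℕ) + 1) * P.Sw (k : ℕ)).trace := fun k =>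
    trace_mul_nonneg (ric_psd P T hε hR hF σ hσ _) (hSw _ k.isLt).posSemidef
  have ht0 : 0 ≤ (P.Ric T σ 0 * P.Sini).trace :=
    trace_mul_nonneg (ric_psd P T hε hR hF σ hσ 0) hSini.posSemidef
  rw [LQData.Jcheck]
  have hsum : P.ε * Real.log (1 + cR (k0 : ℕ) / P.ε * (σ (k0 : ℕ)).trace) ≤
      ∑ k : Fin T,
        (P.ε * Real.log ((σ (k : ℕ) + P.SigQ T σ (k : ℕ)).det / (P.SigQ T σ (k : ℕ)).det) +
          (P.Ric T σ ((k : ℕ) + 1) * P.Sw (k : ℕ)).trace) := by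
    refine le_trans (le_trans (hterm k0) (by linarith [hSwtr k0]))
      (Finset.single_le_sum (f := fun k : Fin T =>
        P.ε * Real.log ((σ (k : ℕ) + P.SigQ T σ (k : ℕ)).det / (P.SigQ T σ (k : ℕ)).det) +
          (P.Ric T σ ((k : ℕ) + 1) * P.Sw (k : ℕ)).trace) ?_ (Finset.mem_univ k0))
    intro k _
    have := le_trans (hterm0 k) (hterm k)
    linarith [hSwtr k]
  rw [hσcoe k0] at hsum
  rw [← hσdef]
  linarith [hsum, ht0]

end LQData

namespace JAux

variable {X : Type*} [TopologicalSpace X] {s : Set X}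

lemma contOn_mul {a b c : ℕ} {f : X → Matrix (Fin a) (Fin b) ℝ} {g : X → Matrix (Fin b) (Fin c) ℝ}
    (hf : ContinuousOn f s) (hg : ContinuousOn g s) : ContinuousOn (fun x => f x * g x) s := by
  rw [continuousOn_iff_continuous_restrict] at hf hg ⊢
  exact hf.matrix_mul hg

lemma contOn_trace {a : ℕ} {f : X → Matrix (Fin a) (Fin a) ℝ} (hf : ContinuousOn f s) :
    ContinuousOn (fun x => (f x).trace) s := by
  rw [continuousOn_iff_continuous_restrict] at hf ⊢
  exact hf.matrix_trace

lemma contOn_det {a : ℕ} {f : X → Matrix (Fin a) (Fin a) ℝ} (hf : ContinuousOn f s) :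
    ContinuousOn (fun x => (f x).det) s := by
  rw [continuousOn_iff_continuous_restrict] at hf ⊢
  exact hf.matrix_det

lemma contOn_inv {a : ℕ} {f : X → Matrix (Fin a) (Fin a) ℝ} (hf : ContinuousOn f s)
    (hdet : ∀ x ∈ s, (f x).det ≠ 0) : ContinuousOn (fun x => (f x)⁻¹) s := by
  intro x hx
  have h1 : ContinuousAt Inv.inv (f x) := by
    apply continuousAt_matrix_inv
    rw [Ring.inverse_eq_inv']
    exact continuousAt_inv₀ (hdet x hx)
  exact h1.comp_continuousWithinAt (hf x hx)

lemma contOn_log {f : X → ℝ} (hf : ContinuousOn f s) (h0 : ∀ x ∈ s, f x ≠ 0) :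
    ContinuousOn (fun x => Real.log (f x)) s := fun x hx =>
  (Real.continuousAt_log (h0 x hx)).comp_continuousWithinAt (hf x hx)

end JAux

namespace LQData
open JAux

variable {n m : ℕ}

theorem ric_contOn (P : LQData n m) (T : ℕ) (hε : 0 < P.ε) (hR : ∀ k < T, (P.R k).PosDef)
    (hF : P.F.PosDef) (k : ℕ) :
    ContinuousOn (fun τ : Fin T → Matrix (Fin m) (Fin m) ℝ => P.Ric T (extT T τ) k)
      {τ | ∀ j, (τ j).PosSemidef} := by
  by_cases h : T ≤ k
  · refine ContinuousOn.congr (continuousOn_const (c := P.F)) ?_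
    intro τ _
    show P.Ric T (extT T τ) k = P.F
    rw [LQData.Ric, dif_pos h]
  · have ih := ric_contOn P T hε hR hF (k + 1)
    have hk : k < T := not_le.mp h
    refine ContinuousOn.congr ?_
      (fun τ hτ => ric_eq_alt P T hε hR hF (extT T τ) (extT_psd τ hτ) k h)
    have hτk : ContinuousOn (fun τ : Fin T → Matrix (Fin m) (Fin m) ℝ => extT T τ k)
        {τ | ∀ j, (τ j).PosSemidef} := by
      have he : (fun τ : Fin T → Matrix (Fin m) (Fin m) ℝ => extT T τ k)
          = fun τ => τ ⟨k, hk⟩ := by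
        funext τ
        simp [extT, hk]
      rw [he]
      exact (continuous_apply _).continuousOn
    have hC : ContinuousOn
        (fun τ : Fin T → Matrix (Fin m) (Fin m) ℝ =>
          (1 / P.ε) • (P.R k + (P.B k)ᵀ * P.Ric T (extT T τ) (k + 1) * P.B k))
        {τ | ∀ j, (τ j).PosSemidef} :=
      ((continuousOn_const.fun_add (contOn_mul (contOn_mul continuousOn_const ih)
        continuousOn_const))).fun_const_smul _
    have hCpd : ∀ τ ∈ {τ : Fin T → Matrix (Fin m) (Fin m) ℝ | ∀ j, (τ j).PosSemidef},
        ((1 / P.ε) • (P.R k + (P.B k)ᵀ * P.Ric T (extT T τ) (k + 1) * P.B k)).PosDef :=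
      fun τ hτ => c_posdef (ric_psd P T hε hR hF (extT T τ) (extT_psd τ hτ) (k + 1))
        (hR k hk) hε
    have hinv : ContinuousOn
        (fun τ : Fin T → Matrix (Fin m) (Fin m) ℝ =>
          (1 + extT T τ k *
            ((1 / P.ε) • (P.R k + (P.B k)ᵀ * P.Ric T (extT T τ) (k + 1) * P.B k)))⁻¹)
        {τ | ∀ j, (τ j).PosSemidef} := by
      refine contOn_inv (continuousOn_const.fun_add (contOn_mul hτk hC)) ?_
      intro τ hτ
      exact (onePlus_det_pos (hCpd τ hτ) (extT_psd τ hτ k)).ne'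
    refine ContinuousOn.fun_sub (contOn_mul (contOn_mul continuousOn_const ih) continuousOn_const)
      (ContinuousOn.fun_const_smul ?_ _)
    exact contOn_mul (contOn_mul (contOn_mul (contOn_mul
      (contOn_mul (contOn_mul continuousOn_const ih) continuousOn_const)
      (contOn_mul hinv hτk)) continuousOn_const) ih) continuousOn_const
termination_by T - k

theorem sigQ_contOn (P : LQData n m) (T : ℕ) (hε : 0 < P.ε) (hR : ∀ k < T, (P.R k).PosDef)
    (hF : P.F.PosDef) (k : ℕ) (hk : k < T) :
    ContinuousOn (fun τ : Fin T → Matrix (Fin m) (Fin m) ℝ => P.SigQ T (extT T τ) k)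
      {τ | ∀ j, (τ j).PosSemidef} := by
  simp only [LQData.SigQ]
  refine ContinuousOn.fun_const_smul (contOn_inv ((continuousOn_const.fun_add
    (contOn_mul (contOn_mul continuousOn_const (ric_contOn P T hε hR hF (k + 1)))
      continuousOn_const))) ?_) _
  intro τ hτ
  have h1 : (P.R k + (P.B k)ᵀ * P.Ric T (extT T τ) (k + 1) * P.B k).PosDef := by
    have h2 := psd_conj (ric_psd P T hε hR hF (extT T τ) (extT_psd τ hτ) (k + 1)) (P.B k)ᵀ
    rw [Matrix.transpose_transpose] at h2
    exact Matrix.PosDef.add_posSemidef (hR k hk) h2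
  exact h1.det_pos.ne'

theorem jcheck_contOn (P : LQData n m) (T : ℕ) (hε : 0 < P.ε) (hR : ∀ k < T, (P.R k).PosDef)
    (hF : P.F.PosDef) (hSini : P.Sini.PosDef) :
    ContinuousOn (fun τ : Fin T → Matrix (Fin m) (Fin m) ℝ => P.Jcheck T τ)
      {τ | ∀ j, (τ j).PosSemidef} := by
  simp only [LQData.Jcheck]
  refine ContinuousOn.fun_mul continuousOn_const (ContinuousOn.fun_add
    (contOn_trace (contOn_mul (ric_contOn P T hε hR hF 0) continuousOn_const)) ?_)
  refine continuousOn_finset_sum _ (fun k _ => ContinuousOn.fun_add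
    (ContinuousOn.fun_mul continuousOn_const ?_)
    (contOn_trace (contOn_mul (ric_contOn P T hε hR hF ((k : ℕ) + 1)) continuousOn_const)))
  have hτk : ContinuousOn (fun τ : Fin T → Matrix (Fin m) (Fin m) ℝ => extT T τ (k : ℕ))
      {τ | ∀ j, (τ j).PosSemidef} := by
    have he : (fun τ : Fin T → Matrix (Fin m) (Fin m) ℝ => extT T τ (k : ℕ))
        = fun τ => τ ⟨(k : ℕ), k.isLt⟩ := by
      funext τ
      simp [extT, k.isLt]
    rw [he]
    exact (continuous_apply _).continuousOn
  have hQ := sigQ_contOn P T hε hR hF (k : ℕ) k.isLt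
  have hQpos : ∀ τ ∈ {τ : Fin T → Matrix (Fin m) (Fin m) ℝ | ∀ j, (τ j).PosSemidef},
      0 < (P.SigQ T (extT T τ) (k : ℕ)).det := fun τ hτ =>
    (sigQ_posdef P T hε hR hF (extT T τ) (extT_psd τ hτ) (k : ℕ) k.isLt).det_pos
  refine contOn_log (ContinuousOn.div₀ (contOn_det (ContinuousOn.fun_add hτk hQ)) (contOn_det hQ)
    (fun τ hτ => (hQpos τ hτ).ne')) ?_
  intro τ hτ
  have hnum : 0 < (extT T τ (k : ℕ) + P.SigQ T (extT T τ) (k : ℕ)).det := by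
    exact (Matrix.PosDef.add_posSemidef
      (sigQ_posdef P T hε hR hF (extT T τ) (extT_psd τ hτ) (k : ℕ) k.isLt)
      (extT_psd τ hτ (k : ℕ))).det_pos.trans_le (le_of_eq (by rw [add_comm]))
  exact (div_pos hnum (hQpos τ hτ)).ne'

end LQData

namespace JAux

lemma psd_entry_le {d : ℕ} {A : Matrix (Fin d) (Fin d) ℝ} (hA : A.PosSemidef) (i j : Fin d) :
    |A i j| ≤ A.trace := by
  have hd : ∀ b, 0 ≤ A b b := psd_diag_nonneg hA
  have htr : 0 ≤ A.trace := psd_trace_nonneg hA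
  by_cases hij : i = j
  · subst hij
    rw [abs_of_nonneg (hd i)]
    exact Finset.single_le_sum (fun b _ => hd b) (Finset.mem_univ i)
  · have hsym : A j i = A i j := by
      have hAt := psd_transpose hA
      have := congrFun (congrFun hAt i) j
      simpa [Matrix.transpose_apply] using this
    have hsum : A i i + A j j ≤ A.trace := by
      have h1 : ∑ b ∈ ({i, j} : Finset (Fin d)), A b b ≤ A.trace :=
        Finset.sum_le_sum_of_subset_of_nonneg (Finset.subset_univ _) (fun b _ _ => hd b)
      rwa [Finset.sum_pair hij] at h1
    have h1 := hA.dotProduct_mulVec_nonneg (Pi.single i (1:ℝ) - Pi.single j 1)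
    have h2 := hA.dotProduct_mulVec_nonneg (Pi.single i (1:ℝ) + Pi.single j 1)
    simp only [star_trivial, Matrix.mulVec_sub, Matrix.mulVec_add, Matrix.mulVec_single,
      sub_dotProduct, add_dotProduct, single_dotProduct,
      dotProduct_sub, dotProduct_add, mul_one, one_mul] at h1 h2
    simp only [Pi.smul_apply, op_smul_eq_mul, mul_one, Matrix.col_apply] at h1 h2
    rw [hsym] at h1 h2
    rw [abs_le]
    constructor <;> linarith

end JAux

open Matrix Filter Topology LQData JAux in
theorem jcheck_exists_min' {n m : ℕ} (hn : 1 ≤ n) (hm : 1 ≤ m) (T : ℕ) (hT : 1 ≤ T)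
    (P : LQData n m) (hε : 0 < P.ε)
    (hR : ∀ k < T, (P.R k).PosDef) (hSw : ∀ k < T, (P.Sw k).PosDef)
    (hF : P.F.PosDef) (hSini : P.Sini.PosDef) :
    ∃ σ : Fin T → Matrix (Fin m) (Fin m) ℝ, (∀ k, (σ k).PosSemidef) ∧
      ∀ τ : Fin T → Matrix (Fin m) (Fin m) ℝ, (∀ k, (τ k).PosSemidef) →
        P.Jcheck T σ ≤ P.Jcheck T τ := by
  classical
  haveI : Nonempty (Fin T) := ⟨⟨0, hT⟩⟩
  -- eigenvalue lower bounds for the `R k`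
  have hex : ∀ k : ℕ, ∃ c : ℝ, 0 < c ∧ (k < T → (P.R k - c • 1).PosSemidef) := by
    intro k
    by_cases hk : k < T
    · obtain ⟨c, hc, hcp⟩ := exists_smul_one_le (show 0 < m by omega) (hR k hk)
      exact ⟨c, hc, fun _ => hcp⟩
    · exact ⟨1, one_pos, fun h => absurd h hk⟩
  choose cR hpos hpsd using hex
  set J0 := P.Jcheck T (fun _ => 0) with hJ0
  set M : ℝ := Finset.univ.sup' Finset.univ_nonempty
    (fun k : Fin T => max 0 ((Real.exp (2 * J0 / P.ε) - 1) / (cR (k : ℕ) / P.ε))) with hM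
  have hMk' : ∀ k : Fin T,
      max 0 ((Real.exp (2 * J0 / P.ε) - 1) / (cR (k : ℕ) / P.ε)) ≤ M := fun k =>
    Finset.le_sup'
      (fun k : Fin T => max 0 ((Real.exp (2 * J0 / P.ε) - 1) / (cR (k : ℕ) / P.ε)))
      (Finset.mem_univ k)
  have hM0 : 0 ≤ M :=
    le_trans (le_max_left _ _) (hMk' (Classical.arbitrary (Fin T)))
  have hMk : ∀ k : Fin T, (Real.exp (2 * J0 / P.ε) - 1) / (cR (k : ℕ) / P.ε) ≤ M :=
    fun k => le_trans (le_max_right _ _) (hMk' k)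
  set SPSD := {τ : Fin T → Matrix (Fin m) (Fin m) ℝ | ∀ j, (τ j).PosSemidef} with hSPSD
  set K := {τ : Fin T → Matrix (Fin m) (Fin m) ℝ |
    (∀ j, (τ j).PosSemidef) ∧ ∀ k, (τ k).trace ≤ M} with hK
  have hKsub : K ⊆ SPSD := fun τ h => h.1
  -- compactness of K
  have hbox : IsCompact (Set.univ.pi fun _ : Fin T => Set.univ.pi fun _ : Fin m =>
      Set.univ.pi fun _ : Fin m => Set.Icc (-M) M) :=
    isCompact_univ_pi fun _ => isCompact_univ_pi fun _ => isCompact_univ_pi fun _ =>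
      isCompact_Icc
  have hclosed : IsClosed K := by
    have : K = (⋂ j : Fin T, {τ : Fin T → Matrix (Fin m) (Fin m) ℝ | (τ j).PosSemidef}) ∩
        ⋂ k : Fin T, {τ : Fin T → Matrix (Fin m) (Fin m) ℝ | (τ k).trace ≤ M} := by
      ext τ
      simp only [hK, Set.mem_setOf_eq, Set.mem_inter_iff, Set.mem_iInter]
    rw [this]
    refine IsClosed.inter (isClosed_iInter fun j => ?_) (isClosed_iInter fun k => ?_)
    · show IsClosed ((fun τ : Fin T → Matrix (Fin m) (Fin m) ℝ => τ j) ⁻¹' {A | A.PosSemidef})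
      exact isClosed_psd.preimage (continuous_apply j)
    · exact isClosed_le ((continuous_apply k).matrix_trace) continuous_const
  have hsub : K ⊆ Set.univ.pi fun _ : Fin T => Set.univ.pi fun _ : Fin m =>
      Set.univ.pi fun _ : Fin m => Set.Icc (-M) M := by
    intro τ hτ
    refine Set.mem_univ_pi.mpr fun k => Set.mem_univ_pi.mpr fun i => Set.mem_univ_pi.mpr fun j => ?_
    have h1 := psd_entry_le (hτ.1 k) i j
    have h2 := hτ.2 k
    rw [Set.mem_Icc]
    exact abs_le.mp (h1.trans h2)
  have hKcompact : IsCompact K := hbox.of_isClosed_subset hclosed hsub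
  have h0K : (fun _ : Fin T => (0 : Matrix (Fin m) (Fin m) ℝ)) ∈ K := by
    refine ⟨fun j => Matrix.PosSemidef.zero, fun k => ?_⟩
    simp only [Matrix.trace_zero]
    exact hM0
  obtain ⟨σ, hσK, hσmin⟩ := hKcompact.exists_isMinOn ⟨_, h0K⟩
    ((jcheck_contOn P T hε hR hF hSini).mono hKsub)
  refine ⟨σ, hσK.1, ?_⟩
  intro τ hτ
  by_cases hτK : ∀ k : Fin T, (τ k).trace ≤ M
  · exact isMinOn_iff.mp hσmin τ ⟨hτ, hτK⟩
  · push_neg at hτK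
    obtain ⟨k0, hk0⟩ := hτK
    have h1 : P.Jcheck T σ ≤ J0 := isMinOn_iff.mp hσmin _ h0K
    have hc' : 0 < cR (k0 : ℕ) / P.ε := div_pos (hpos _) hε
    have h2 : J0 ≤ P.ε / 2 * Real.log (1 + cR (k0 : ℕ) / P.ε * (τ k0).trace) := by
      have hMk0 := hMk k0
      rw [div_le_iff₀ hc'] at hMk0
      have hexp : Real.exp (2 * J0 / P.ε) ≤ 1 + cR (k0 : ℕ) / P.ε * (τ k0).trace := by
        nlinarith [hk0, hc']
      have hlog : 2 * J0 / P.ε ≤ Real.log (1 + cR (k0 : ℕ) / P.ε * (τ k0).trace) := by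
        have := Real.log_le_log (Real.exp_pos _) hexp
        rwa [Real.log_exp] at this
      rw [div_le_iff₀ hε] at hlog
      nlinarith [hlog]
    have h3 := jcheck_lb P T hε hR hSw hF hSini cR (fun k hk => ⟨hpos k, hpsd k hk⟩) τ hτ k0
    linarith

theorem jcheck_exists_min {n m : ℕ} (hn : 1 ≤ n) (hm : 1 ≤ m) (T : ℕ) (hT : 1 ≤ T)
    (P : LQData n m) (hε : 0 < P.ε)
    (hR : ∀ k < T, (P.R k).PosDef) (hSw : ∀ k < T, (P.Sw k).PosDef)
    (hF : P.F.PosDef) (hSini : P.Sini.PosDef) :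
    ∃ σ : Fin T → Matrix (Fin m) (Fin m) ℝ, (∀ k, (σ k).PosSemidef) ∧
      ∀ τ : Fin T → Matrix (Fin m) (Fin m) ℝ, (∀ k, (τ k).PosSemidef) →
        P.Jcheck T σ ≤ P.Jcheck T τ :=
  jcheck_exists_min' hn hm T hT P hε hR hSw hF hSini
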